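/- The congeniality relation on null-elements of the first component φ of a nontrivial solution of the system φ' = f₁(t)ψ, ψ' = -g₁(t)φ is an equivalence relation: it is reflexive, symmetric, and transitive on the set of null-elements of φ. -/

import Mathlib

open Set intervalIntegral

/-- The zero set of `φ` within `[a,b]`. -/
def ZeroSet (φ : ℝ → ℝ) (a b : ℝ) : Set ℝ := {t ∈ Set.Icc a b | φ t = 0}

/-- A null-element of `φ`: a connected component of the zero set of `φ` in `[a,b]`. -/
def IsNullElement (φ : ℝ → ℝ) (a b : ℝ) (N : Set ℝ) : Prop :=
  ∃ t ∈ ZeroSet φ a b, N = connectedComponentIn (ZeroSet φ a b) t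

/-- Null-elements `N₁`, `N₂` of `φ` are congenerous (with respect to the weight `f·y`) if
`|∫_{t₁}^{t} f y| < π` for all `t₁ ∈ N₁`, `t₂ ∈ N₂` and all `t` between `t₁` and `t₂`. -/
def Congenerous (f y φ : ℝ → ℝ) (a b : ℝ) (N₁ N₂ : Set ℝ) : Prop :=
  IsNullElement φ a b N₁ ∧ IsNullElement φ a b N₂ ∧
  ∀ t₁ ∈ N₁, ∀ t₂ ∈ N₂, ∀ t ∈ Set.uIcc t₁ t₂, |∫ τ in t₁..t, f τ * y τ| < Real.pi

/-- A null-class of `φ`: an equivalence class of congenerous null-elements. -/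
def IsNullClass (f y φ : ℝ → ℝ) (a b : ℝ) (C : Set (Set ℝ)) : Prop :=
  ∃ N, IsNullElement φ a b N ∧ C = {M | Congenerous f y φ a b N M}

/-- The ordering `x ≺ y` on subsets of `ℝ`: every element of `x` is less than
every element of `y`. -/
def SetLT (x y : Set ℝ) : Prop := ∀ s ∈ x, ∀ t ∈ y, s < t

/-- The congeniality relation on null-elements of `φ` (for a nontrivial solution of
`φ' = f₁ ψ, ψ' = -g₁ φ`) is an equivalence relation: reflexive, symmetric and
transitive on the set of null-elements.  Here `y = Im z > 0` where `z` solves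
`z' + f₁ z² + g₁ = 0`, `z(a) = i`. -/
theorem congenerous_equivalence
    (a b : ℝ) (hab : a < b) (f₁ g₁ : ℝ → ℝ)
    (hf : ContinuousOn f₁ (Set.Icc a b)) (hg : ContinuousOn g₁ (Set.Icc a b))
    (φ ψ : ℝ → ℝ)
    (hφ : ∀ t ∈ Set.Icc a b, HasDerivAt φ (f₁ t * ψ t) t)
    (hψ : ∀ t ∈ Set.Icc a b, HasDerivAt ψ (-(g₁ t * φ t)) t)
    (hnt : ∃ t ∈ Set.Icc a b, φ t ≠ 0 ∨ ψ t ≠ 0)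
    (z : ℝ → ℂ)
    (hz : ∀ t ∈ Set.Icc a b, HasDerivAt z (-((f₁ t : ℂ) * z t ^ 2 + (g₁ t : ℂ))) t)
    (hza : z a = Complex.I)
    (hzim : ∀ t ∈ Set.Icc a b, 0 < (z t).im) :
    (∀ N : Set ℝ, IsNullElement φ a b N →
      Congenerous f₁ (fun t => (z t).im) φ a b N N) ∧
    (∀ N₁ N₂ : Set ℝ, Congenerous f₁ (fun t => (z t).im) φ a b N₁ N₂ →
      Congenerous f₁ (fun t => (z t).im) φ a b N₂ N₁) ∧
    (∀ N₁ N₂ N₃ : Set ℝ, Congenerous f₁ (fun t => (z t).im) φ a b N₁ N₂ →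
      Congenerous f₁ (fun t => (z t).im) φ a b N₂ N₃ →
      Congenerous f₁ (fun t => (z t).im) φ a b N₁ N₃) := by
  have hπ := Real.pi_pos
  -- continuity facts
  have hzc : ContinuousOn z (Set.Icc a b) := fun t ht =>
    (hz t ht).continuousAt.continuousWithinAt
  have hφc : ContinuousOn φ (Set.Icc a b) := fun t ht =>
    (hφ t ht).continuousAt.continuousWithinAt
  have hψc : ContinuousOn ψ (Set.Icc a b) := fun t ht =>
    (hψ t ht).continuousAt.continuousWithinAt
  have hyc : ContinuousOn (fun t => (z t).im) (Set.Icc a b) :=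
    Complex.continuous_im.comp_continuousOn hzc
  have hfyc : ContinuousOn (fun t => f₁ t * (z t).im) (Set.Icc a b) := hf.mul hyc
  have hfzc : ContinuousOn (fun t => (f₁ t : ℂ) * z t) (Set.Icc a b) :=
    (Complex.continuous_ofReal.comp_continuousOn hf).mul hzc
  set θ : ℝ → ℝ := fun t => ∫ τ in a..t, f₁ τ * (z τ).im with hθdef
  set P : ℝ → ℂ := fun t => ∫ τ in a..t, (f₁ τ : ℂ) * z τ with hPdef
  have hZsub : ZeroSet φ a b ⊆ Set.Icc a b := fun t ht => ht.1
  have hsub : ∀ t ∈ Set.Icc a b, ∀ t' ∈ Set.Icc a b, Set.uIcc t t' ⊆ Set.Icc a b :=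
    fun t ht t' ht' => ordConnected_Icc.uIcc_subset ht ht'
  have hint : ∀ t₁ ∈ Set.Icc a b, ∀ t ∈ Set.Icc a b,
      IntervalIntegrable (fun τ => f₁ τ * (z τ).im) MeasureTheory.volume t₁ t :=
    fun t₁ h1 t ht => (hfyc.mono (hsub t₁ h1 t ht)).intervalIntegrable
  have hintz : ∀ t₁ ∈ Set.Icc a b, ∀ t ∈ Set.Icc a b,
      IntervalIntegrable (fun τ => (f₁ τ : ℂ) * z τ) MeasureTheory.volume t₁ t :=
    fun t₁ h1 t ht => (hfzc.mono (hsub t₁ h1 t ht)).intervalIntegrable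
  have haI : a ∈ Set.Icc a b := Set.left_mem_Icc.2 hab.le
  -- rewriting the interval integral through θ
  have key_eq : ∀ t₁ ∈ Set.Icc a b, ∀ t ∈ Set.Icc a b,
      (∫ τ in t₁..t, f₁ τ * (z τ).im) = θ t - θ t₁ := by
    intro t₁ h1 t ht
    rw [hθdef]
    exact (intervalIntegral.integral_interval_sub_left (hint a haI t ht)
      (hint a haI t₁ h1)).symm
  -- θ is the imaginary part of P
  have hθP : ∀ t ∈ Set.Icc a b, θ t = (P t).im := by
    intro t ht
    have h := Complex.imCLM.intervalIntegral_comp_comm (hintz a haI t ht)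
    rw [hθdef, hPdef]
    simp only [Complex.imCLM_apply] at h
    rw [← h]
    simp [Complex.mul_im]
  -- FTC : derivative of P from the right
  have hPderiv : ∀ x ∈ Set.Ico a b,
      HasDerivWithinAt P ((f₁ x : ℂ) * z x) (Set.Ici x) x := by
    intro x hx
    have hxI : x ∈ Set.Icc a b := ⟨hx.1, hx.2.le⟩
    have hmem : Set.Icc a b ∈ nhdsWithin x (Set.Ioi x) := by
      have h1 : Set.Ioc x b ∈ nhdsWithin x (Set.Ioi x) :=
        Ioc_mem_nhdsGT_of_mem ⟨le_refl x, hx.2⟩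
      exact Filter.mem_of_superset h1 (fun y hy => ⟨hx.1.trans hy.1.le, hy.2⟩)
    have hmeas : StronglyMeasurableAtFilter (fun τ => (f₁ τ : ℂ) * z τ)
        (nhdsWithin x (Set.Ioi x)) :=
      (hfzc.stronglyMeasurableAtFilter_nhdsWithin measurableSet_Icc x).filter_mono
        (nhdsWithin_le_iff.2 hmem)
    have hcont : ContinuousWithinAt (fun τ => (f₁ τ : ℂ) * z τ) (Set.Ioi x) x :=
      (hfzc x hxI).mono_of_mem_nhdsWithin hmem
    exact intervalIntegral.integral_hasDerivWithinAt_right (hintz a haI x hxI) hmeas hcont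
  have hPc : ContinuousOn P (Set.Icc a b) := by
    have h := intervalIntegral.continuousOn_primitive_interval
      (f := fun τ => (f₁ τ : ℂ) * z τ) (a := a) (b := b) (μ := MeasureTheory.volume)
      (by rw [Set.uIcc_of_le hab.le]
          exact (hfzc.mono Set.Subset.rfl).integrableOn_compact isCompact_Icc)
    rwa [Set.uIcc_of_le hab.le] at h
  -- the conserved quantity G
  set q : ℝ → ℂ := fun t => (φ t : ℂ) * z t - (ψ t : ℂ) with hqdef
  set G : ℝ → ℂ := fun t => q t * Complex.exp (P t) with hGdef
  have hGc : ContinuousOn G (Set.Icc a b) := by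
    apply ContinuousOn.mul
    · exact ((Complex.continuous_ofReal.comp_continuousOn hφc).mul hzc).sub
        (Complex.continuous_ofReal.comp_continuousOn hψc)
    · exact Complex.continuous_exp.comp_continuousOn hPc
  have hGderiv : ∀ x ∈ Set.Ico a b, HasDerivWithinAt G 0 (Set.Ici x) x := by
    intro x hx
    have hxI : x ∈ Set.Icc a b := ⟨hx.1, hx.2.le⟩
    have hφ' : HasDerivWithinAt (fun t => (φ t : ℂ)) ((f₁ x * ψ x : ℝ) : ℂ) (Set.Ici x) x :=
      (hφ x hxI).ofReal_comp.hasDerivWithinAt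
    have hψ' : HasDerivWithinAt (fun t => (ψ t : ℂ)) ((-(g₁ x * φ x) : ℝ) : ℂ) (Set.Ici x) x :=
      (hψ x hxI).ofReal_comp.hasDerivWithinAt
    have hz' : HasDerivWithinAt z (-((f₁ x : ℂ) * z x ^ 2 + (g₁ x : ℂ))) (Set.Ici x) x :=
      (hz x hxI).hasDerivWithinAt
    have hq' : HasDerivWithinAt q
        (((f₁ x * ψ x : ℝ) : ℂ) * z x + (φ x : ℂ) * (-((f₁ x : ℂ) * z x ^ 2 + (g₁ x : ℂ)))
          - ((-(g₁ x * φ x) : ℝ) : ℂ)) (Set.Ici x) x :=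
      (hφ'.mul hz').sub hψ'
    have hE' : HasDerivWithinAt (fun t => Complex.exp (P t))
        (Complex.exp (P x) * ((f₁ x : ℂ) * z x)) (Set.Ici x) x :=
      (hPderiv x hx).cexp
    have hG' := hq'.mul hE'
    refine hG'.congr_deriv ?_
    rw [hqdef]
    push_cast
    ring
  have hGconst : ∀ t ∈ Set.Icc a b, G t = G a :=
    constant_of_has_deriv_right_zero hGc hGderiv
  have hGa : G a = (φ a : ℂ) * Complex.I - (ψ a : ℂ) := by
    rw [hGdef]
    simp [hPdef, intervalIntegral.integral_same, hqdef, hza]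
  -- nontriviality of the initial data
  have hC : ¬ (φ a = 0 ∧ ψ a = 0) := by
    rintro ⟨h1, h2⟩
    obtain ⟨t, ht, hne⟩ := hnt
    have hGt : G t = 0 := by rw [hGconst t ht, hGa, h1, h2]; simp
    have hq0 : q t = 0 := by
      rcases mul_eq_zero.1 hGt with h | h
      · exact h
      · exact absurd h (Complex.exp_ne_zero _)
    have him : φ t * (z t).im = 0 := by
      have := congrArg Complex.im hq0
      simpa [hqdef, Complex.mul_im] using this
    have hφ0 : φ t = 0 := by
      rcases mul_eq_zero.1 him with h | h
      · exact h
      · exact absurd h (hzim t ht).ne'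
    have hψ0 : ψ t = 0 := by
      have := congrArg Complex.re hq0
      simp [hqdef, Complex.mul_re, hφ0] at this
      linarith
    rcases hne with h | h
    · exact h hφ0
    · exact h hψ0
  -- the key trigonometric relation at zeros of φ
  have hzero : ∀ s ∈ ZeroSet φ a b,
      φ a * Real.cos (θ s) + ψ a * Real.sin (θ s) = 0 := by
    intro s hs
    obtain ⟨hsI, hφs⟩ := hs
    have hGs : G s = (φ a : ℂ) * Complex.I - (ψ a : ℂ) := by
      rw [hGconst s hsI, hGa]
    have hqs : q s = -(ψ s : ℂ) := by rw [hqdef]; simp [hφs]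
    rw [hGdef] at hGs
    simp only [] at hGs
    rw [hqs] at hGs
    have hre := congrArg Complex.re hGs
    have him := congrArg Complex.im hGs
    rw [hθP s hsI]
    simp [Complex.mul_re, Complex.mul_im, Complex.exp_re, Complex.exp_im] at hre him
    linear_combination (-Real.cos ((P s).im)) * him - Real.sin ((P s).im) * hre
  -- θ-values at zeros differ by multiples of π
  have keyZ : ∀ s ∈ ZeroSet φ a b, ∀ s' ∈ ZeroSet φ a b,
      ∃ n : ℤ, θ s - θ s' = n * Real.pi := by
    intro s hs s' hs'
    have h1 := hzero s hs
    have h2 := hzero s' hs'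
    have hsin : Real.sin (θ s - θ s') = 0 := by
      rw [Real.sin_sub]
      rcases not_and_or.1 hC with h | h
      · have hAd : φ a * (Real.sin (θ s) * Real.cos (θ s') - Real.cos (θ s) * Real.sin (θ s')) = 0 := by
          linear_combination Real.sin (θ s) * h2 - Real.sin (θ s') * h1
        exact (mul_eq_zero.1 hAd).resolve_left h
      · have hBd : ψ a * (Real.sin (θ s) * Real.cos (θ s') - Real.cos (θ s) * Real.sin (θ s')) = 0 := by
          linear_combination Real.cos (θ s') * h1 - Real.cos (θ s) * h2
        exact (mul_eq_zero.1 hBd).resolve_left h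
    obtain ⟨n, hn⟩ := Real.sin_eq_zero_iff.1 hsin
    exact ⟨n, hn.symm⟩
  -- continuity of θ
  have hθc : ContinuousOn θ (Set.Icc a b) := by
    have h := intervalIntegral.continuousOn_primitive_interval
      (f := fun τ => f₁ τ * (z τ).im) (a := a) (b := b) (μ := MeasureTheory.volume)
      (by rw [Set.uIcc_of_le hab.le]
          exact hfyc.integrableOn_compact isCompact_Icc)
    rwa [Set.uIcc_of_le hab.le] at h
  -- θ is constant on each null-element
  have hNsub : ∀ N, IsNullElement φ a b N → N ⊆ ZeroSet φ a b := by
    rintro N ⟨t₀, ht₀, rfl⟩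
    exact connectedComponentIn_subset _ _
  have hconstN : ∀ N, IsNullElement φ a b N → ∀ t ∈ N, ∀ t' ∈ N, θ t = θ t' := by
    intro N hN t ht t' ht'
    obtain ⟨t₀, ht₀, rfl⟩ := hN
    set M := connectedComponentIn (ZeroSet φ a b) t₀ with hM
    have hMZ : M ⊆ ZeroSet φ a b := connectedComponentIn_subset _ _
    have hpre : IsPreconnected M := isPreconnected_connectedComponentIn
    have main : ∀ s ∈ M, ∀ s' ∈ M, θ s < θ s' → False := by
      intro s hs s' hs' hlt
      obtain ⟨n, hn⟩ := keyZ s' (hMZ hs') s (hMZ hs)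
      have hn1 : (1 : ℝ) ≤ (n : ℝ) := by
        have hn0 : 0 < (n : ℝ) * Real.pi := by linarith
        have : 0 < n := by
          by_contra hcon
          push_neg at hcon
          have : (n : ℝ) ≤ 0 := by exact_mod_cast hcon
          nlinarith
        exact_mod_cast this
      have hπle : Real.pi ≤ θ s' - θ s := by nlinarith
      have hIV := hpre.intermediate_value hs hs' (hθc.mono (hMZ.trans hZsub))
      have hmem : θ s + Real.pi / 2 ∈ Set.Icc (θ s) (θ s') := ⟨by linarith, by linarith⟩
      obtain ⟨w, hw, hwθ⟩ := hIV hmem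
      obtain ⟨m, hm⟩ := keyZ w (hMZ hw) s (hMZ hs)
      rw [hwθ] at hm
      have h2m : ((2 * m - 1 : ℤ) : ℝ) * Real.pi = 0 := by push_cast; linarith
      rcases mul_eq_zero.1 h2m with h | h
      · have : (2 * m - 1 : ℤ) = 0 := by exact_mod_cast h
        omega
      · exact Real.pi_ne_zero h
    rcases lt_trichotomy (θ t) (θ t') with h | h | h
    · exact absurd (main t ht t' ht' h) (by simp)
    · exact h
    · exact absurd (main t' ht' t ht h) (by simp)
  -- congenerous null-elements have equal θ-values
  have hcong_eq : ∀ N₁ N₂, Congenerous f₁ (fun t => (z t).im) φ a b N₁ N₂ →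
      ∀ t₁ ∈ N₁, ∀ t₂ ∈ N₂, θ t₁ = θ t₂ := by
    rintro N₁ N₂ ⟨h1, h2, h3⟩ t₁ ht₁ t₂ ht₂
    have ht₁Z := hNsub _ h1 ht₁
    have ht₂Z := hNsub _ h2 ht₂
    have ht₁I := hZsub ht₁Z
    have ht₂I := hZsub ht₂Z
    have habs := h3 t₁ ht₁ t₂ ht₂ t₂ Set.right_mem_uIcc
    rw [key_eq t₁ ht₁I t₂ ht₂I] at habs
    obtain ⟨n, hn⟩ := keyZ t₂ ht₂Z t₁ ht₁Z
    have hn0 : n = 0 := by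
      by_contra h
      have h1' : (1 : ℝ) ≤ |(n : ℝ)| := by exact_mod_cast Int.one_le_abs h
      have : Real.pi ≤ |θ t₂ - θ t₁| := by
        rw [hn, abs_mul, abs_of_pos hπ]
        nlinarith
      linarith
    rw [hn0] at hn
    push_cast at hn
    linarith
  refine ⟨?_, ?_, ?_⟩
  · -- reflexivity
    intro N hN
    refine ⟨hN, hN, ?_⟩
    intro t₁ ht₁ t₂ ht₂ t ht
    have hNZ := hNsub N hN
    have hNord : OrdConnected N := by
      obtain ⟨t₀, ht₀, rfl⟩ := hN
      exact isPreconnected_connectedComponentIn.ordConnected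
    have htN : t ∈ N := hNord.uIcc_subset ht₁ ht₂ ht
    rw [key_eq t₁ (hZsub (hNZ ht₁)) t (hZsub (hNZ htN)),
      hconstN N hN t htN t₁ ht₁]
    simpa using hπ
  · -- symmetry
    rintro N₁ N₂ ⟨h1, h2, h3⟩
    refine ⟨h2, h1, ?_⟩
    intro t₂ ht₂ t₁ ht₁ t ht
    rw [Set.uIcc_comm] at ht
    have ht₁I := hZsub (hNsub _ h1 ht₁)
    have ht₂I := hZsub (hNsub _ h2 ht₂)
    have htI : t ∈ Set.Icc a b := hsub t₁ ht₁I t₂ ht₂I ht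
    have e12 := hcong_eq N₁ N₂ ⟨h1, h2, h3⟩ t₁ ht₁ t₂ ht₂
    have habs := h3 t₁ ht₁ t₂ ht₂ t ht
    rw [key_eq t₁ ht₁I t htI] at habs
    rw [key_eq t₂ ht₂I t htI, ← e12]
    exact habs
  · -- transitivity
    rintro N₁ N₂ N₃ hc12 hc23
    obtain ⟨h1, h2, h12⟩ := hc12
    obtain ⟨h2', h3, h23⟩ := hc23
    refine ⟨h1, h3, ?_⟩
    intro t₁ ht₁ t₃ ht₃ t ht
    obtain ⟨t₀, ht₀, hN₂⟩ := h2
    have ht₂ : t₀ ∈ N₂ := by rw [hN₂]; exact mem_connectedComponentIn ht₀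
    have ht₁I := hZsub (hNsub _ h1 ht₁)
    have ht₂I := hZsub (hNsub _ h2' ht₂)
    have ht₃I := hZsub (hNsub _ h3 ht₃)
    have e12 := hcong_eq N₁ N₂ ⟨h1, h2', h12⟩ t₁ ht₁ t₀ ht₂
    rcases Set.uIcc_subset_uIcc_union_uIcc (b := t₀) ht with h | h
    · exact h12 t₁ ht₁ t₀ ht₂ t h
    · have htI : t ∈ Set.Icc a b := hsub t₀ ht₂I t₃ ht₃I h
      have habs := h23 t₀ ht₂ t₃ ht₃ t h
      rw [key_eq t₀ ht₂I t htI] at habs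
      rw [key_eq t₁ ht₁I t htI, e12]
      exact habs
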